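/- Let F = ZMod 2 and let I be the ideal of the polynomial ring F[x, y, z] generated by the three elements x + y + z, x*y + y*z + z*x + 1, and x*y*z. Then the quotient ring F[x, y, z] / I has dimension 6 as a vector space over F. -/

import Mathlib

open MvPolynomial

/-- The ideal of `𝔽₂[x,y,z]` generated by `x + y + z`, `x*y + y*z + z*x + 1`
and `x*y*z` (the relations defining the SU(3) instanton homology of the theta
web). -/
noncomputable def thetaIdeal : Ideal (MvPolynomial (Fin 3) (ZMod 2)) :=
  Ideal.span
    {X 0 + X 1 + X 2,
     X 0 * X 1 + X 1 * X 2 + X 2 * X 0 + 1,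
     X 0 * X 1 * X 2}

namespace ThetaAux

local notation "F" => ZMod 2
local notation "P" => MvPolynomial (Fin 3) (ZMod 2)

noncomputable abbrev Q : Type := MvPolynomial (Fin 3) (ZMod 2) ⧸ thetaIdeal

noncomputable def a : Q := Ideal.Quotient.mk _ (X 0)
noncomputable def b : Q := Ideal.Quotient.mk _ (X 1)
noncomputable def c : Q := Ideal.Quotient.mk _ (X 2)

lemma two_eq_zero : (2 : Q) = 0 := by
  have h := map_ofNat (algebraMap F Q) 2
  rw [← h, show (2 : F) = 0 from rfl, map_zero]

lemma rel1 : a + b + c = 0 := by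
  have h : (X 0 + X 1 + X 2 : P) ∈ thetaIdeal :=
    Ideal.subset_span (by simp)
  have := (Ideal.Quotient.eq_zero_iff_mem).2 h
  simpa only [a, b, c, map_add, map_mul, map_one] using this

lemma rel2 : a * b + b * c + c * a + 1 = 0 := by
  have h : (X 0 * X 1 + X 1 * X 2 + X 2 * X 0 + 1 : P) ∈ thetaIdeal :=
    Ideal.subset_span (by simp)
  have := (Ideal.Quotient.eq_zero_iff_mem).2 h
  simpa only [a, b, c, map_add, map_mul, map_one] using this

lemma rel3 : a * b * c = 0 := by
  have h : (X 0 * X 1 * X 2 : P) ∈ thetaIdeal :=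
    Ideal.subset_span (by simp)
  have := (Ideal.Quotient.eq_zero_iff_mem).2 h
  simpa only [a, b, c, map_add, map_mul, map_one] using this

lemma ha : a = b + c := by
  linear_combination rel1 - (b + c) * two_eq_zero

lemma hb2 : b * b = b * c + c * c + 1 := by
  linear_combination (b + c) * rel1 - rel2 - (b * c + c * c) * two_eq_zero

lemma hc3 : c * c * c = c := by
  linear_combination b * c * rel1 - rel3 - c * hb2 - (b * c * c + c) * two_eq_zero

noncomputable def S : Submodule F Q :=
  Submodule.span F {1, b, c, b * c, c * c, b * c * c}

lemma mem1 : (1 : Q) ∈ S := Submodule.subset_span (Set.mem_insert _ _)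
lemma memb : b ∈ S :=
  Submodule.subset_span (Set.mem_insert_of_mem _ (Set.mem_insert _ _))
lemma memc : c ∈ S :=
  Submodule.subset_span (Set.mem_insert_of_mem _ (Set.mem_insert_of_mem _ (Set.mem_insert _ _)))
lemma membc : b * c ∈ S :=
  Submodule.subset_span (Set.mem_insert_of_mem _ (Set.mem_insert_of_mem _
    (Set.mem_insert_of_mem _ (Set.mem_insert _ _))))
lemma memcc : c * c ∈ S :=
  Submodule.subset_span (Set.mem_insert_of_mem _ (Set.mem_insert_of_mem _
    (Set.mem_insert_of_mem _ (Set.mem_insert_of_mem _ (Set.mem_insert _ _)))))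
lemma membcc : b * c * c ∈ S :=
  Submodule.subset_span (Set.mem_insert_of_mem _ (Set.mem_insert_of_mem _
    (Set.mem_insert_of_mem _ (Set.mem_insert_of_mem _ (Set.mem_insert_of_mem _ rfl)))))

lemma mul_c_mem {s : Q} (hs : s ∈ S) : s * c ∈ S := by
  induction hs using Submodule.span_induction with
  | mem x hx =>
    rcases hx with rfl | rfl | rfl | rfl | rfl | rfl
    · simpa using memc
    · exact membc
    · exact memcc
    · exact membcc
    · have : c * c * c = c := hc3
      rw [this]; exact memc
    · have : b * c * c * c = b * c := by linear_combination b * hc3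
      rw [this]; exact membc
  | zero => simpa using S.zero_mem
  | add x y _ _ hx hy => rw [add_mul]; exact S.add_mem hx hy
  | smul r x _ hx => rw [smul_mul_assoc]; exact S.smul_mem r hx

lemma mul_b_mem {s : Q} (hs : s ∈ S) : s * b ∈ S := by
  induction hs using Submodule.span_induction with
  | mem x hx =>
    rcases hx with rfl | rfl | rfl | rfl | rfl | rfl
    · simpa using memb
    · rw [hb2]; exact S.add_mem (S.add_mem membc memcc) mem1
    · rw [mul_comm]; exact membc
    · have : b * c * b = b * c * c := by
        linear_combination c * hb2 + hc3 + c * two_eq_zero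
      rw [this]; exact membcc
    · have : c * c * b = b * c * c := by ring
      rw [this]; exact membcc
    · have : b * c * c * b = b * c := by
        linear_combination c * c * hb2 + b * hc3 + c * hc3 + c * c * two_eq_zero
      rw [this]; exact membc
  | zero => simpa using S.zero_mem
  | add x y _ _ hx hy => rw [add_mul]; exact S.add_mem hx hy
  | smul r x _ hx => rw [smul_mul_assoc]; exact S.smul_mem r hx

lemma mul_a_mem {s : Q} (hs : s ∈ S) : s * a ∈ S := by
  rw [ha, mul_add]
  exact S.add_mem (mul_b_mem hs) (mul_c_mem hs)

lemma S_eq_top : S = ⊤ := by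
  rw [eq_top_iff]
  rintro x -
  obtain ⟨p, rfl⟩ := Ideal.Quotient.mk_surjective x
  induction p using MvPolynomial.induction_on with
  | C r =>
    have h : (Ideal.Quotient.mk thetaIdeal) (MvPolynomial.C r) = r • (1 : Q) := by
      rw [show (Ideal.Quotient.mk thetaIdeal) (MvPolynomial.C r) = algebraMap F Q r from rfl,
        Algebra.algebraMap_eq_smul_one]
    rw [h]
    exact S.smul_mem r mem1
  | add p q hp hq =>
    rw [map_add]; exact S.add_mem hp hq
  | mul_X p i hp =>
    rw [map_mul]
    fin_cases i
    · exact mul_a_mem hp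
    · exact mul_b_mem hp
    · exact mul_c_mem hp

instance : Module.Finite F Q :=
  Module.finite_def.mpr (S_eq_top ▸ Submodule.fg_span (Set.toFinite _))

lemma finrank_le : Module.finrank F Q ≤ 6 := by
  have hv : Submodule.span F (Set.range ![(1 : Q), b, c, b * c, c * c, b * c * c]) = ⊤ := by
    rw [show Set.range ![(1 : Q), b, c, b * c, c * c, b * c * c]
        = {1, b, c, b * c, c * c, b * c * c} from by
      simp only [Matrix.range_cons, Matrix.range_empty, Set.singleton_union, Set.union_empty]]
    exact S_eq_top
  simpa using finrank_le_of_span_eq_top hv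

/-! ### The lower bound, via a surjection onto `𝔽₂[ε]³`. -/

abbrev D : Type := DualNumber (ZMod 2)
abbrev T : Type := D × D × D

noncomputable def u : D := 1 + DualNumber.eps

lemma D2 : (2 : D) = 0 := by
  rw [← one_add_one_eq_two]
  refine TrivSqZeroExt.ext ?_ ?_
  · rw [TrivSqZeroExt.fst_add, TrivSqZeroExt.fst_one, TrivSqZeroExt.fst_zero]; decide
  · rw [TrivSqZeroExt.snd_add, TrivSqZeroExt.snd_one, TrivSqZeroExt.snd_zero]; decide

lemma u2 : u * u = 1 := by
  unfold u
  linear_combination (DualNumber.eps : D) * D2 + DualNumber.eps_mul_eps (R := ZMod 2)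

noncomputable def pa : T := (0, u, u)
noncomputable def pb : T := (u, 0, u)
noncomputable def pc : T := (u, u, 0)

lemma relT1 : pa + pb + pc = 0 := by
  simp only [pa, pb, pc, Prod.mk_add_mk, Prod.mk_eq_zero]
  refine ⟨?_, ?_, ?_⟩ <;> linear_combination u * D2

lemma relT2 : pa * pb + pb * pc + pc * pa + 1 = 0 := by
  simp only [pa, pb, pc, Prod.mk_add_mk, Prod.mk_mul_mk, Prod.one_eq_mk, Prod.mk_eq_zero]
  refine ⟨?_, ?_, ?_⟩ <;> linear_combination u2 + D2

lemma relT3 : pa * pb * pc = 0 := by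
  simp only [pa, pb, pc, Prod.mk_mul_mk, Prod.mk_eq_zero]
  refine ⟨?_, ?_, ?_⟩ <;> ring

noncomputable def phi : MvPolynomial (Fin 3) (ZMod 2) →ₐ[F] T :=
  MvPolynomial.aeval ![pa, pb, pc]

lemma phi_X0 : phi (X 0) = pa := by simp [phi]
lemma phi_X1 : phi (X 1) = pb := by simp [phi]
lemma phi_X2 : phi (X 2) = pc := by simp [phi]

lemma vanish : ∀ p ∈ thetaIdeal, phi p = 0 := by
  intro p hp
  have hle : thetaIdeal ≤ RingHom.ker phi := by
    rw [thetaIdeal, Ideal.span_le]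
    rintro q (rfl | rfl | rfl) <;> rw [SetLike.mem_coe, RingHom.mem_ker]
    · simp only [map_add, phi_X0, phi_X1, phi_X2]; exact relT1
    · simp only [map_add, map_mul, map_one, phi_X0, phi_X1, phi_X2]; exact relT2
    · simp only [map_mul, phi_X0, phi_X1, phi_X2]; exact relT3
  simpa using RingHom.mem_ker.mp (hle hp)

noncomputable def psi : Q →ₐ[F] T := Ideal.Quotient.liftₐ thetaIdeal phi vanish

lemma psi_mk (p : MvPolynomial (Fin 3) (ZMod 2)) :
    psi (Ideal.Quotient.mk thetaIdeal p) = phi p := by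
  rw [psi, Ideal.Quotient.liftₐ_apply]
  rfl

lemma decomp (d : D) :
    d = TrivSqZeroExt.fst d • (1 : D) + TrivSqZeroExt.snd d • DualNumber.eps := by
  refine TrivSqZeroExt.ext ?_ ?_
  · simp [TrivSqZeroExt.fst_add, TrivSqZeroExt.fst_smul, smul_eq_mul]
  · simp [TrivSqZeroExt.snd_add, TrivSqZeroExt.snd_smul, smul_eq_mul]

lemma range_psi_top : LinearMap.range psi.toLinearMap = ⊤ := by
  set R := LinearMap.range psi.toLinearMap
  have hmem : ∀ p : MvPolynomial (Fin 3) (ZMod 2), phi p ∈ R := fun p => ⟨Ideal.Quotient.mk thetaIdeal p, by rw [AlgHom.toLinearMap_apply]; exact psi_mk p⟩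
  -- slot 1
  have h1 : ((1 : D), (0 : D), (0 : D)) ∈ R := by
    have := hmem (X 1 * X 2)
    rw [map_mul, phi_X1, phi_X2] at this
    simpa only [pb, pc, Prod.mk_mul_mk, mul_zero, zero_mul, u2] using this
  have h1' : ((u : D), (0 : D), (0 : D)) ∈ R := by
    have := hmem (X 1 * X 1 * X 2)
    rw [map_mul, map_mul, phi_X1, phi_X2] at this
    have hu3 : u * u * u = u := by rw [u2, one_mul]
    simpa only [pb, pc, Prod.mk_mul_mk, mul_zero, zero_mul, hu3] using this
  have h2 : ((0 : D), (1 : D), (0 : D)) ∈ R := by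
    have := hmem (X 2 * X 0)
    rw [map_mul, phi_X2, phi_X0] at this
    simpa only [pa, pc, Prod.mk_mul_mk, mul_zero, zero_mul, u2] using this
  have h2' : ((0 : D), (u : D), (0 : D)) ∈ R := by
    have := hmem (X 2 * X 2 * X 0)
    rw [map_mul, map_mul, phi_X2, phi_X0] at this
    have hu3 : u * u * u = u := by rw [u2, one_mul]
    simpa only [pa, pc, Prod.mk_mul_mk, mul_zero, zero_mul, hu3] using this
  have h3 : ((0 : D), (0 : D), (1 : D)) ∈ R := by
    have := hmem (X 0 * X 1)
    rw [map_mul, phi_X0, phi_X1] at this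
    simpa only [pa, pb, Prod.mk_mul_mk, mul_zero, zero_mul, u2] using this
  have h3' : ((0 : D), (0 : D), (u : D)) ∈ R := by
    have := hmem (X 0 * X 0 * X 1)
    rw [map_mul, map_mul, phi_X0, phi_X1] at this
    have hu3 : u * u * u = u := by rw [u2, one_mul]
    simpa only [pa, pb, Prod.mk_mul_mk, mul_zero, zero_mul, hu3] using this
  -- epsilon vectors
  have e1 : ((DualNumber.eps : D), (0 : D), (0 : D)) ∈ R := by
    have := R.sub_mem h1' h1
    simpa only [Prod.mk_sub_mk, sub_zero, u, add_sub_cancel_left] using this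
  have e2 : ((0 : D), (DualNumber.eps : D), (0 : D)) ∈ R := by
    have := R.sub_mem h2' h2
    simpa only [Prod.mk_sub_mk, sub_zero, u, add_sub_cancel_left] using this
  have e3 : ((0 : D), (0 : D), (DualNumber.eps : D)) ∈ R := by
    have := R.sub_mem h3' h3
    simpa only [Prod.mk_sub_mk, sub_zero, u, add_sub_cancel_left] using this
  rw [eq_top_iff]
  rintro ⟨x, y, z⟩ -
  have hx : (x, y, z) =
      TrivSqZeroExt.fst x • ((1 : D), (0 : D), (0 : D))
      + TrivSqZeroExt.snd x • ((DualNumber.eps : D), (0 : D), (0 : D))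
      + TrivSqZeroExt.fst y • ((0 : D), (1 : D), (0 : D))
      + TrivSqZeroExt.snd y • ((0 : D), (DualNumber.eps : D), (0 : D))
      + TrivSqZeroExt.fst z • ((0 : D), (0 : D), (1 : D))
      + TrivSqZeroExt.snd z • ((0 : D), (0 : D), (DualNumber.eps : D)) := by
    simp only [Prod.smul_mk, Prod.mk_add_mk, smul_zero, add_zero, zero_add]
    exact Prod.ext (decomp x) (Prod.ext (decomp y) (decomp z))
  rw [hx]
  exact R.add_mem (R.add_mem (R.add_mem (R.add_mem (R.add_mem
    (R.smul_mem _ h1) (R.smul_mem _ e1)) (R.smul_mem _ h2)) (R.smul_mem _ e2))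
    (R.smul_mem _ h3)) (R.smul_mem _ e3)

instance : Fintype D := inferInstanceAs (Fintype (ZMod 2 × ZMod 2))

lemma finrank_T : Module.finrank F T = 6 := by
  have hcard : Fintype.card T = 64 := by
    rw [Fintype.card_prod, Fintype.card_prod]
    norm_num [show Fintype.card D = 4 from by
      rw [show Fintype.card D = Fintype.card (ZMod 2 × ZMod 2) from rfl,
        Fintype.card_prod, ZMod.card]]
  have h := Module.card_eq_pow_finrank (K := F) (V := T)
  rw [hcard, ZMod.card] at h
  have : (2 : ℕ) ^ 6 = 2 ^ Module.finrank F T := h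
  exact (Nat.pow_right_injective (le_refl 2) this.symm)

lemma finrank_ge : 6 ≤ Module.finrank F Q := by
  have h := LinearMap.finrank_range_le (R := F) psi.toLinearMap
  rw [range_psi_top, finrank_top, finrank_T] at h
  exact h

end ThetaAux

/-- The quotient of `𝔽₂[x,y,z]` by the ideal generated by `x + y + z`,
`x*y + y*z + z*x + 1` and `x*y*z` is a 6-dimensional vector space over `𝔽₂`. -/
theorem theta_web_quotient_dim_six :
    Module.finrank (ZMod 2) (MvPolynomial (Fin 3) (ZMod 2) ⧸ thetaIdeal) = 6 :=
  le_antisymm ThetaAux.finrank_le ThetaAux.finrank_ge
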